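/- arXiv:1109.6220 — 2 statements merged into one kernel-verified Lean document; each statement's English description precedes it below -/
import Mathlib

section
/- The initialised concurrent game (G_1, s_1) has no Nash equilibrium. -/
open MeasureTheory Filter

noncomputable section

instance : Fact ((0:ℝ) < 1) := ⟨one_pos⟩

/-- The source of randomness used to run strategies: a countable product of circle groups,
which is a compact group, equipped below with its normalised Haar measure.  Under this
measure the coordinates (read as reals in `[0,1)`) are i.i.d. uniform random variables. -/
abbrev USpace : Type := ℕ → AddCircle (1:ℝ)

/-- The normalised Haar (probability) measure on `USpace`. -/
def uHaar : Measure USpace :=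
  ((Measure.addHaar (G := USpace)) Set.univ)⁻¹ • Measure.addHaar

/-- The `n`-th uniform coordinate, as a real number in `[0,1)`. -/
def coordReal (u : USpace) (n : ℕ) : ℝ := ((AddCircle.equivIco 1 0) (u n) : ℝ)

/-- A concurrent game with players `P`, states `S` and actions `A` (all finite and nonempty):
each player `i` has a nonempty set `act i s` of actions available at each state `s`, there is a
transition function `tr` and a reward function `rew i` for each player. -/
structure ConcurrentGame (P S A : Type) [Fintype P] [Nonempty P] [Fintype S] [Nonempty S]
    [Fintype A] [Nonempty A] : Type where
  act : P → S → Set A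
  act_nonempty : ∀ i s, (act i s).Nonempty
  tr : S → (P → A) → S
  rew : P → S → ℝ

/-- A history (without its final state): the list of (state, action profile) pairs seen so far,
in chronological order. -/
abbrev Hist (P S A : Type) := List (S × (P → A))

variable {P S A : Type} [Fintype P] [Nonempty P] [Fintype S] [Nonempty S]
  [Fintype A] [Nonempty A] [DecidableEq P]

namespace ConcurrentGame

/-- A (randomised) strategy of player `i`: for every history `x` and current state `s`,
a probability distribution on actions, supported on the available actions `act i s`. -/
structure Strategy (G : ConcurrentGame P S A) (i : P) where
  prob : Hist P S A → S → A → ℝ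
  nonneg : ∀ x s a, 0 ≤ prob x s a
  sum_one : ∀ x s, ∑ a, prob x s a = 1
  supp : ∀ x s a, prob x s a ≠ 0 → a ∈ G.act i s

variable {G : ConcurrentGame P S A}

/-- A pure strategy: every prescribed distribution is degenerate. -/
def Strategy.IsPure {i : P} (σ : Strategy G i) : Prop := ∀ x s, ∃ a, σ.prob x s a = 1

/-- A stationary strategy: depends only on the current state. -/
def Strategy.IsStationary {i : P} (σ : Strategy G i) : Prop :=
  ∀ x y s, σ.prob x s = σ.prob y s

/-- A positional strategy: pure and stationary. -/
def Strategy.IsPositional {i : P} (σ : Strategy G i) : Prop :=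
  σ.IsPure ∧ σ.IsStationary

end ConcurrentGame

/-- A strategy profile: one strategy for each player. -/
abbrev Profile (G : ConcurrentGame P S A) := ∀ i : P, G.Strategy i

namespace ConcurrentGame

def IsPureProfile {G : ConcurrentGame P S A} (σ : Profile G) : Prop := ∀ i, (σ i).IsPure
def IsStationaryProfile {G : ConcurrentGame P S A} (σ : Profile G) : Prop :=
  ∀ i, (σ i).IsStationary
def IsPositionalProfile {G : ConcurrentGame P S A} (σ : Profile G) : Prop :=
  ∀ i, (σ i).IsPositional

variable (G : ConcurrentGame P S A)

/-- An action profile is legal at `s` if each player's action is available to her. -/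
def Legal (s : S) (a : P → A) : Prop := ∀ i, a i ∈ G.act i s

/-- A play of the game: an infinite sequence of (state, action profile) pairs such that every
action profile is legal and consecutive states are related by the transition function. -/
def IsPlay (π : ℕ → S × (P → A)) : Prop :=
  ∀ n, G.Legal (π n).1 (π n).2 ∧ (π (n + 1)).1 = G.tr (π n).1 (π n).2

/-- The limit-average (mean) payoff of player `i` along a sequence of states. -/
def payOf (i : P) (ss : ℕ → S) : ℝ :=
  Filter.liminf (fun n : ℕ => (∑ j ∈ Finset.range n, G.rew i (ss j)) / n) Filter.atTop

/-- The probability that profile `a` is played after history `(x, s)` under profile `σ`. -/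
def weight (σ : Profile G) (x : Hist P S A) (s : S) (a : P → A) : ℝ :=
  ∏ i, (σ i).prob x s (a i)

/-- cumulative distribution of `f` w.r.t. a fixed enumeration of action profiles. -/
def cum (f : (P → A) → ℝ) (k : ℕ) : ℝ :=
  ∑ b ∈ Finset.univ.filter (fun b => ((Fintype.equivFin (P → A)) b : ℕ) < k), f b

/-- Sample an action profile from the distribution `f` via inverse-cdf transform of `u ∈ [0,1)`. -/
def pick (f : (P → A) → ℝ) (u : ℝ) : P → A :=
  (Fintype.equivFin (P → A)).symm
    (if h : (Finset.univ.filter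
          (fun k : Fin (Fintype.card (P → A)) => cum (P := P) (A := A) f ((k : ℕ) + 1) ≤ u)).card
        < Fintype.card (P → A)
      then ⟨_, h⟩ else ⟨0, Fintype.card_pos⟩)

/-- The history induced from initial state `s₀` by a finite sequence of action profiles. -/
def histOf (s₀ : S) : List (P → A) → Hist P S A × S
  | [] => ([], s₀)
  | a :: l =>
    let h : Hist P S A × S := histOf (G.tr s₀ a) l
    ((s₀, a) :: h.1, h.2)

/-- The first `n` action profiles of the play run by profile `σ` from `s₀`,
driven by the source of randomness `u`. -/
def samplePrefix (σ : Profile G) (s₀ : S) (u : USpace) : ℕ → List (P → A)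
  | 0 => []
  | n + 1 =>
    let l : List (P → A) := samplePrefix σ s₀ u n
    let h : Hist P S A × S := G.histOf s₀ l
    l ++ [pick (G.weight σ h.1 h.2) (coordReal u n)]

/-- The state at time `n` of the play run by `σ` from `s₀` with randomness `u`. -/
def stateAt (σ : Profile G) (s₀ : S) (u : USpace) (n : ℕ) : S :=
  (G.histOf s₀ (G.samplePrefix σ s₀ u n)).2

/-- The expected (limit-average) payoff of player `i` under the strategy profile `σ`,
starting from `s₀`: the integral of the mean payoff over the induced measure on plays. -/
def expPay (σ : Profile G) (s₀ : S) (i : P) : ℝ :=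
  ∫ u, G.payOf i (G.stateAt σ s₀ u) ∂uHaar

/-- The probability that the play under `σ` from `s₀` ever visits the set `T` of states. -/
def probVisit (σ : Profile G) (s₀ : S) (T : Set S) : ℝ :=
  (uHaar {u | ∃ n, G.stateAt σ s₀ u n ∈ T}).toReal

/-- A Nash equilibrium: no player can increase her expected payoff by unilaterally
switching to another strategy. -/
def IsNash (σ : Profile G) (s₀ : S) : Prop :=
  ∀ (i : P) (τ : G.Strategy i),
    G.expPay (Function.update σ i τ) s₀ i ≤ G.expPay σ s₀ i

/-- `pval i s`: the least payoff the coalition of all other players can inflict on player `i`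
using pure strategy profiles, when the game starts at `s`. -/
def pval (i : P) (s : S) : ℝ :=
  ⨅ σ : {σ : Profile G // IsPureProfile σ}, ⨆ τ : G.Strategy i,
    G.expPay (Function.update σ.1 i τ) s i

/-- A state is terminal if every legal action profile leads back to it. -/
def Terminal (s : S) : Prop := ∀ a, G.Legal s a → G.tr s a = s

/-- A terminal-reward game: non-zero rewards occur only at terminal states. -/
def IsTerminalReward : Prop := ∀ (i : P) (s : S), ¬ G.Terminal s → G.rew i s = 0

/-- `a` is `z`-secure at `s`: `a` is legal at `s`, and whenever a single player `i` deviates to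
some available action `b`, the resulting state has `pval i ≤ z i`. -/
def zSecure (z : P → EReal) (s : S) (a : P → A) : Prop :=
  G.Legal s a ∧
    ∀ (i : P), ∀ b ∈ G.act i s, (G.pval i (G.tr s (Function.update a i b)) : EReal) ≤ z i

/-- The edge relation of the graph `G(z)`: an edge from `s` to `t` iff some `z`-secure action
profile at `s` leads to `t`. -/
def secureEdge (z : P → EReal) (s t : S) : Prop :=
  ∃ a, G.zSecure z s a ∧ G.tr s a = t

end ConcurrentGame

end

/-! ## Statement: the game `G₁` has no Nash equilibrium -/

noncomputable section

/-- The states of the game `G₁`: the non-terminal state `s1` and two terminal states `l`, `r`. -/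
inductive G1State : Type
  | s1 | l | r
  deriving DecidableEq

instance : Fintype G1State :=
  ⟨{G1State.s1, G1State.l, G1State.r}, fun x => by cases x <;> simp⟩

instance : Nonempty G1State := ⟨G1State.s1⟩

/-- The game `G₁` of Example 1: two players (player 1 = `0`, player 2 = `1`), both with actions
`a` (= `false`) and `b` (= `true`) at every state.  At `s1`, the profile `(a,a)` loops to `s1`,
`(b,b)` leads to `l` and `(a,b)`, `(b,a)` lead to `r`; `l` and `r` are terminal.  At `r` player 1
gets reward `1` and player 2 gets `-1`; at `l` player 1 gets `-1` and player 2 gets `1`; all other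
rewards are `0`. -/
def gameG1 : ConcurrentGame (Fin 2) G1State Bool where
  act _ _ := Set.univ
  act_nonempty _ _ := ⟨false, trivial⟩
  tr s a :=
    match s with
    | .s1 =>
      if a 0 = false ∧ a 1 = false then .s1
      else if a 0 = true ∧ a 1 = true then .l
      else .r
    | .l => .l
    | .r => .r
  rew i s :=
    match s with
    | .s1 => 0
    | .l => if i = 0 then -1 else 1
    | .r => if i = 0 then 1 else -1


/-! ### Auxiliary development for the proof -/

set_option linter.unusedSectionVars false
open ConcurrentGame

section Pick
variable {P A : Type} [Fintype P] [Nonempty P] [Fintype A] [Nonempty A] [DecidableEq P]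

variable {f : (P → A) → ℝ}

/-- index of a profile -/
noncomputable abbrev pidx (b : P → A) : ℕ := ((Fintype.equivFin (P → A)) b : ℕ)

lemma cum_mono (hf : ∀ b, 0 ≤ f b) : Monotone (cum f) := by
  intro k k' hkk'
  apply Finset.sum_le_sum_of_subset_of_nonneg
  · exact Finset.monotone_filter_right _ (fun b _ hb => lt_of_lt_of_le hb hkk')
  · exact fun b _ _ => hf b

lemma cum_zero : cum f 0 = 0 := by simp [cum]

lemma cum_of_card_le {k : ℕ} (h : Fintype.card (P → A) ≤ k) : cum f k = ∑ b, f b := by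
  unfold cum
  rw [Finset.filter_true_of_mem]
  intro b _
  exact lt_of_lt_of_le (Fin.is_lt _) h

lemma cum_nonneg (hf : ∀ b, 0 ≤ f b) (k : ℕ) : 0 ≤ cum f k :=
  Finset.sum_nonneg fun b _ => hf b

lemma cum_le_sum (hf : ∀ b, 0 ≤ f b) (k : ℕ) : cum f k ≤ ∑ b, f b :=
  Finset.sum_le_sum_of_subset_of_nonneg (Finset.filter_subset _ _) (fun b _ _ => hf b)

lemma cum_succ {k : ℕ} (h : k < Fintype.card (P → A)) :
    cum f (k + 1) = cum f k + f ((Fintype.equivFin (P → A)).symm ⟨k, h⟩) := by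
  classical
  unfold cum
  have hset : Finset.univ.filter (fun b : P → A => pidx b < k + 1) =
      insert ((Fintype.equivFin (P → A)).symm ⟨k, h⟩)
        (Finset.univ.filter (fun b : P → A => pidx b < k)) := by
    ext b
    simp only [Finset.mem_filter, Finset.mem_univ, true_and, Finset.mem_insert]
    constructor
    · intro hb
      rcases Nat.lt_succ_iff_lt_or_eq.mp hb with h1 | h1
      · exact Or.inr h1
      · left
        rw [Equiv.eq_symm_apply]
        exact Fin.ext h1
    · rintro (rfl | h1)
      · simp [pidx]
      · omega
  rw [hset, Finset.sum_insert (by simp [pidx]), add_comm]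

lemma cum_pidx_succ (b : P → A) : cum f (pidx b + 1) = cum f (pidx b) + f b := by
  have hb : (Fintype.equivFin (P → A)).symm ⟨pidx b, Fin.is_lt _⟩ = b := by
    rw [Equiv.symm_apply_eq]
  rw [cum_succ (Fin.is_lt _), hb]

lemma mem_iff_lt_card_of_downclosed {n : ℕ} (D : Finset (Fin n))
    (hD : ∀ k k' : Fin n, k' ≤ k → k ∈ D → k' ∈ D) (k : Fin n) : k ∈ D ↔ (k : ℕ) < D.card := by
  constructor
  · intro hk
    have hsub : Finset.Iic k ⊆ D := fun j hj => hD k j (Finset.mem_Iic.mp hj) hk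
    have := Finset.card_le_card hsub
    rw [Fin.card_Iic] at this
    omega
  · intro hk
    by_contra hkD
    have hsub : D ⊆ Finset.Iio k := by
      intro j hj
      rw [Finset.mem_Iio]
      by_contra hjk
      exact hkD (hD j k (le_of_not_gt hjk) hj)
    have := Finset.card_le_card hsub
    rw [Fin.card_Iio] at this
    omega

variable (hf : ∀ b, 0 ≤ f b) (hsum : ∑ b, f b = 1) {u : ℝ} (hu : u ∈ Set.Ico (0:ℝ) 1)

include hf hsum hu in
lemma pick_spec : cum f (pidx (pick f u)) ≤ u ∧ u < cum f (pidx (pick f u) + 1) := by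
  classical
  set N := Fintype.card (P → A) with hN
  set D := Finset.univ.filter (fun k : Fin N => cum f ((k : ℕ) + 1) ≤ u) with hDdef
  have hdc : ∀ k k' : Fin N, k' ≤ k → k ∈ D → k' ∈ D := by
    intro k k' hle hk
    simp only [hDdef, Finset.mem_filter, Finset.mem_univ, true_and] at hk ⊢
    exact le_trans (cum_mono hf (by exact Nat.add_le_add_right hle 1)) hk
  have hmem : ∀ k : Fin N, k ∈ D ↔ (k : ℕ) < D.card := mem_iff_lt_card_of_downclosed D hdc
  have hNpos : 0 < N := Fintype.card_pos
  have hcard : D.card < N := by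
    by_contra hge
    push_neg at hge
    have hlast : (⟨N - 1, by omega⟩ : Fin N) ∈ D := (hmem _).mpr (by simp only [Fin.val_mk]; omega)
    simp only [hDdef, Finset.mem_filter, Finset.mem_univ, true_and] at hlast
    have : cum f (N - 1 + 1) = 1 := by
      rw [show N - 1 + 1 = N by omega, cum_of_card_le (le_refl _), hsum]
    rw [this] at hlast
    exact absurd (lt_of_le_of_lt hlast hu.2) (lt_irrefl _)
  have hpick : pick f u = (Fintype.equivFin (P → A)).symm ⟨D.card, hcard⟩ := by
    unfold pick
    rw [dif_pos hcard]
  have hidx : pidx (pick f u) = D.card := by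
    rw [hpick]
    simp [pidx]
  rw [hidx]
  constructor
  · rcases Nat.eq_zero_or_pos D.card with h0 | hpos
    · rw [h0, cum_zero]; exact hu.1
    · have hm : (⟨D.card - 1, by omega⟩ : Fin N) ∈ D := (hmem _).mpr (by simp only [Fin.val_mk]; omega)
      simp only [hDdef, Finset.mem_filter, Finset.mem_univ, true_and] at hm
      have : D.card - 1 + 1 = D.card := by omega
      rwa [this] at hm
  · have hm : (⟨D.card, hcard⟩ : Fin N) ∉ D := by
      intro h
      have := (hmem _).mp h
      simp at this
    simp only [hDdef, Finset.mem_filter, Finset.mem_univ, true_and] at hm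
    exact lt_of_not_ge hm

include hf hsum hu in
lemma pick_eq_iff (b : P → A) :
    pick f u = b ↔ (cum f (pidx b) ≤ u ∧ u < cum f (pidx b + 1)) := by
  constructor
  · rintro rfl
    exact pick_spec hf hsum hu
  · rintro ⟨h1, h2⟩
    obtain ⟨h1', h2'⟩ := pick_spec hf hsum hu (f := f)
    set b' := pick f u
    have : pidx b' = pidx b := by
      rcases lt_trichotomy (pidx b') (pidx b) with h | h | h
      · exfalso
        have : cum f (pidx b' + 1) ≤ cum f (pidx b) := cum_mono hf h
        linarith
      · exact h
      · exfalso
        have : cum f (pidx b + 1) ≤ cum f (pidx b') := cum_mono hf h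
        linarith
    have := Fin.ext (n := Fintype.card (P → A)) this
    exact (Fintype.equivFin (P → A)).injective this

include hf hsum hu in
lemma pick_pos : 0 < f (pick f u) := by
  obtain ⟨h1, h2⟩ := pick_spec hf hsum hu (f := f)
  have := cum_pidx_succ (f := f) (pick f u)
  linarith

include hf hsum in
lemma pick_preimage (b : P → A) :
    {x : ℝ | x ∈ Set.Ico (0:ℝ) 1 ∧ pick f x = b} = Set.Ico (cum f (pidx b)) (cum f (pidx b + 1)) := by
  ext x
  simp only [Set.mem_setOf_eq, Set.mem_Ico]
  constructor
  · rintro ⟨hx, hpx⟩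
    exact (pick_eq_iff hf hsum hx b).mp hpx
  · rintro ⟨h1, h2⟩
    have hx : x ∈ Set.Ico (0:ℝ) 1 := by
      constructor
      · exact le_trans (cum_nonneg hf _) h1
      · calc x < cum f (pidx b + 1) := h2
          _ ≤ 1 := by rw [← hsum]; exact cum_le_sum hf _
    exact ⟨hx, (pick_eq_iff hf hsum hx b).mpr ⟨h1, h2⟩⟩

end Pick

section Circle
open AddCircle

lemma vol_eq_of_diff_subsingleton {S T : Set ℝ} {a : ℝ} (h : S \ T ⊆ {a}) :
    volume S = volume (S ∩ T) := by
  apply le_antisymm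
  · calc volume S = volume ((S ∩ T) ∪ (S \ T)) := by rw [Set.inter_union_diff]
      _ ≤ volume (S ∩ T) + volume (S \ T) := measure_union_le _ _
      _ ≤ volume (S ∩ T) + volume ({a} : Set ℝ) := by gcongr
      _ = volume (S ∩ T) := by rw [Real.volume_singleton, add_zero]
  · exact measure_mono Set.inter_subset_left

lemma coord_mem_Ico (c : AddCircle (1:ℝ)) :
    ((AddCircle.equivIco 1 0 c : ℝ)) ∈ Set.Ico (0:ℝ) 1 := by
  obtain ⟨h1, h2⟩ := (AddCircle.equivIco 1 0 c).2
  exact ⟨h1, by linarith⟩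

lemma measurableSet_equivIco_preimage (B : Set ℝ) (hBm : MeasurableSet B) :
    MeasurableSet {c : AddCircle (1:ℝ) | ((AddCircle.equivIco 1 0 c : ℝ)) ∈ B} := by
  have : {c : AddCircle (1:ℝ) | ((AddCircle.equivIco 1 0 c : ℝ)) ∈ B}
      = (AddCircle.measurableEquivIco 1 0) ⁻¹' (Subtype.val ⁻¹' B) := rfl
  rw [this]
  exact (AddCircle.measurableEquivIco 1 0).measurable (measurable_subtype_coe hBm)

lemma volume_equivIco_preimage {B : Set ℝ} (hBm : MeasurableSet B) (hB : B ⊆ Set.Ico 0 1) :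
    volume {c : AddCircle (1:ℝ) | ((AddCircle.equivIco 1 0 c : ℝ)) ∈ B} = volume B := by
  have hU := measurableSet_equivIco_preimage B hBm
  rw [AddCircle.add_projection_respects_measure (T := 1) 0 hU]
  have hcoe : ∀ x : ℝ, x ∈ Set.Ico (0:ℝ) 1 →
      ((AddCircle.equivIco 1 0 ((x : AddCircle (1:ℝ))) : ℝ)) = x := by
    intro x hx
    have : AddCircle.equivIco 1 0 ((x : AddCircle (1:ℝ))) = ⟨x, by simpa using hx⟩ := by
      rw [Equiv.apply_eq_iff_eq_symm_apply]; rfl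
    rw [this]
  set S : Set ℝ := QuotientAddGroup.mk ⁻¹'
      {c : AddCircle (1:ℝ) | ((AddCircle.equivIco 1 0 c : ℝ)) ∈ B} ∩ Set.Ioc 0 (0+1) with hS
  have h1 : volume S = volume (S ∩ Set.Ioo 0 1) := by
    apply vol_eq_of_diff_subsingleton (a := 1)
    intro x hx
    obtain ⟨⟨_, hx2⟩, hx3⟩ := hx
    rw [zero_add] at hx2
    simp only [Set.mem_singleton_iff]
    rcases hx2 with ⟨hlt, hle⟩
    rcases lt_or_eq_of_le hle with h | h
    · exact absurd ⟨hlt, h⟩ hx3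
    · exact h
  have h2 : volume B = volume (B ∩ Set.Ioo 0 1) := by
    apply vol_eq_of_diff_subsingleton (a := 0)
    intro x hx
    obtain ⟨hx1, hx3⟩ := hx
    obtain ⟨h0, h1'⟩ := hB hx1
    simp only [Set.mem_singleton_iff]
    rcases lt_or_eq_of_le h0 with h | h
    · exact absurd ⟨h, h1'⟩ hx3
    · exact h.symm
  have h3 : S ∩ Set.Ioo 0 1 = B ∩ Set.Ioo 0 1 := by
    ext x
    simp only [hS, Set.mem_inter_iff, Set.mem_preimage, Set.mem_setOf_eq, Set.mem_Ioo,
      Set.mem_Ioc, and_congr_left_iff]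
    intro hx
    rw [hcoe x ⟨le_of_lt hx.1, hx.2⟩]
    constructor
    · rintro ⟨h, _⟩; exact h
    · intro h; exact ⟨h, ⟨hx.1, by rw [zero_add]; exact le_of_lt hx.2⟩⟩
  rw [h1, h3, ← h2]

end Circle

section PickCell
variable {P A : Type} [Fintype P] [Nonempty P] [Fintype A] [Nonempty A] [DecidableEq P]

noncomputable def pickCell (w : (P → A) → ℝ) (b : P → A) : Set (AddCircle (1:ℝ)) :=
  {c | pick w ((AddCircle.equivIco 1 0 c : ℝ)) = b}

variable {w : (P → A) → ℝ} (hf : ∀ b, 0 ≤ w b) (hsum : ∑ b, w b = 1)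

include hf hsum in
lemma pickCell_eq (b : P → A) : pickCell w b =
    {c : AddCircle (1:ℝ) | ((AddCircle.equivIco 1 0 c : ℝ)) ∈
      Set.Ico (cum w (pidx b)) (cum w (pidx b + 1))} := by
  ext c
  exact pick_eq_iff hf hsum (coord_mem_Ico c) b

include hf hsum in
lemma measurableSet_pickCell (b : P → A) : MeasurableSet (pickCell w b) := by
  rw [pickCell_eq hf hsum]
  exact measurableSet_equivIco_preimage _ measurableSet_Ico

include hf hsum in
lemma volume_pickCell (b : P → A) : volume (pickCell w b) = ENNReal.ofReal (w b) := by
  rw [pickCell_eq hf hsum, volume_equivIco_preimage measurableSet_Ico]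
  · rw [Real.volume_Ico, cum_pidx_succ, add_sub_cancel_left]
  · intro x hx
    refine ⟨le_trans (cum_nonneg hf _) hx.1, lt_of_lt_of_le hx.2 ?_⟩
    rw [← hsum]
    exact cum_le_sum hf _

end PickCell

section Cylinder

lemma addHaar_univ_pos : 0 < (Measure.addHaar (G := USpace)) Set.univ :=
  isOpen_univ.measure_pos _ Set.univ_nonempty

lemma addHaar_univ_lt_top : (Measure.addHaar (G := USpace)) Set.univ < ⊤ :=
  isCompact_univ.measure_lt_top

instance : IsProbabilityMeasure uHaar := by
  constructor
  rw [uHaar, Measure.smul_apply, smul_eq_mul]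
  exact ENNReal.inv_mul_cancel (ne_of_gt addHaar_univ_pos) (ne_of_lt addHaar_univ_lt_top)

instance : Measure.IsAddHaarMeasure uHaar :=
  Measure.IsAddHaarMeasure.smul _
    (by simp [ne_of_lt addHaar_univ_lt_top])
    (by simp [ne_of_gt addHaar_univ_pos])

instance : IsProbabilityMeasure (volume : Measure (AddCircle (1:ℝ))) :=
  ⟨by rw [AddCircle.measure_univ]; exact ENNReal.ofReal_one⟩

lemma uHaar_cylinder (n : ℕ) (B : Fin n → Set (AddCircle (1:ℝ)))
    (hB : ∀ j, MeasurableSet (B j)) :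
    uHaar {u : USpace | ∀ j : Fin n, u j ∈ B j} = ∏ j, volume (B j) := by
  classical
  let proj : USpace →+ (Fin n → AddCircle (1:ℝ)) :=
    { toFun := fun u j => u (j : ℕ)
      map_zero' := rfl
      map_add' := fun _ _ => rfl }
  have hc : Continuous proj := continuous_pi (fun j => continuous_apply ((j : ℕ)))
  have hs : Function.Surjective proj := by
    intro v
    refine ⟨fun m => if h : m < n then v ⟨m, h⟩ else 0, ?_⟩
    funext j
    simp [proj, j.isLt]
  have h1 : Measure.IsAddHaarMeasure (Measure.map proj uHaar) :=
    Measure.isAddHaarMeasure_map_of_isFiniteMeasure uHaar proj hc hs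
  have h2 : IsProbabilityMeasure (Measure.map proj uHaar) :=
    Measure.isProbabilityMeasure_map hc.measurable.aemeasurable
  have h3 : Measure.map proj uHaar = Measure.pi (fun _ : Fin n => volume) :=
    Measure.isAddHaarMeasure_eq_of_isProbabilityMeasure _ _
  have h4 : {u : USpace | ∀ j : Fin n, u (j : ℕ) ∈ B j} = proj ⁻¹' (Set.univ.pi B) := by
    ext u
    simp [proj, Set.mem_pi]
  rw [h4, ← Measure.map_apply hc.measurable (MeasurableSet.univ_pi hB), h3, Measure.pi_pi]

end Cylinder



section GameGeneral
variable {P S A : Type} [Fintype P] [Nonempty P] [Fintype S] [Nonempty S]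
  [Fintype A] [Nonempty A] [DecidableEq P] {G : ConcurrentGame P S A}

lemma histOf_append (s0 : S) (l : List (P → A)) (b : P → A) :
    G.histOf s0 (l ++ [b]) =
      ((G.histOf s0 l).1 ++ [((G.histOf s0 l).2, b)], G.tr (G.histOf s0 l).2 b) := by
  induction l generalizing s0 with
  | nil => simp [ConcurrentGame.histOf]
  | cons a l ih => simp [ConcurrentGame.histOf, ih]

lemma length_samplePrefix (σ : Profile G) (s0 : S) (u : USpace) (n : ℕ) :
    (G.samplePrefix σ s0 u n).length = n := by
  induction n with
  | zero => rfl
  | succ n ih => simp [ConcurrentGame.samplePrefix, ih]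

lemma stateAt_zero (σ : Profile G) (s0 : S) (u : USpace) : G.stateAt σ s0 u 0 = s0 := rfl

lemma samplePrefix_succ (σ : Profile G) (s0 : S) (u : USpace) (n : ℕ) :
    G.samplePrefix σ s0 u (n + 1) = G.samplePrefix σ s0 u n ++
      [pick (G.weight σ (G.histOf s0 (G.samplePrefix σ s0 u n)).1
          (G.histOf s0 (G.samplePrefix σ s0 u n)).2) (coordReal u n)] := rfl

lemma stateAt_succ (σ : Profile G) (s0 : S) (u : USpace) (n : ℕ) :
    G.stateAt σ s0 u (n + 1) = G.tr (G.stateAt σ s0 u n)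
      (pick (G.weight σ (G.histOf s0 (G.samplePrefix σ s0 u n)).1
          (G.histOf s0 (G.samplePrefix σ s0 u n)).2) (coordReal u n)) := by
  show (G.histOf s0 (G.samplePrefix σ s0 u (n+1))).2 = _
  rw [samplePrefix_succ, histOf_append]
  rfl

lemma weight_nonneg (σ : Profile G) (x : Hist P S A) (s : S) (b : P → A) :
    0 ≤ G.weight σ x s b :=
  Finset.prod_nonneg fun i _ => (σ i).nonneg _ _ _

lemma weight_sum_one (σ : Profile G) (x : Hist P S A) (s : S) :
    ∑ b, G.weight σ x s b = 1 := by
  classical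
  unfold ConcurrentGame.weight
  calc ∑ b : P → A, ∏ i, (σ i).prob x s (b i)
      = ∑ b ∈ Fintype.piFinset (fun _ : P => (Finset.univ : Finset A)),
          ∏ i, (σ i).prob x s (b i) := by rw [Fintype.piFinset_univ]
    _ = ∏ i, ∑ a, (σ i).prob x s a := (Finset.prod_univ_sum _ _).symm
    _ = 1 := Finset.prod_eq_one fun i _ => (σ i).sum_one x s

lemma measurableSet_pick_coord (w : (P → A) → ℝ) (hf : ∀ b, 0 ≤ w b) (hsum : ∑ b, w b = 1)
    (n : ℕ) (b : P → A) :
    MeasurableSet {u : USpace | pick w (coordReal u n) = b} := by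
  have : {u : USpace | pick w (coordReal u n) = b} = (fun u : USpace => u n) ⁻¹' (pickCell w b) :=
    rfl
  rw [this]
  exact (measurable_pi_apply n) (measurableSet_pickCell hf hsum b)

lemma measurableSet_samplePrefix (σ : Profile G) (s0 : S) (n : ℕ) (L : List (P → A)) :
    MeasurableSet {u : USpace | G.samplePrefix σ s0 u n = L} := by
  classical
  induction n generalizing L with
  | zero =>
    rcases L with _ | ⟨b, L⟩
    · convert MeasurableSet.univ
      ext u
      simp [ConcurrentGame.samplePrefix]
    · convert MeasurableSet.empty
      ext u
      simp [ConcurrentGame.samplePrefix]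
  | succ n ih =>
    rcases List.eq_nil_or_concat' L with rfl | ⟨L', b, rfl⟩
    · convert MeasurableSet.empty
      ext u
      simp [samplePrefix_succ]
    · have hset : {u : USpace | G.samplePrefix σ s0 u (n+1) = L' ++ [b]} =
          {u | G.samplePrefix σ s0 u n = L'} ∩
          {u | pick (G.weight σ (G.histOf s0 L').1 (G.histOf s0 L').2) (coordReal u n) = b} := by
        ext u
        simp only [Set.mem_setOf_eq, Set.mem_inter_iff, samplePrefix_succ]
        rw [← List.concat_eq_append, ← List.concat_eq_append, List.concat_inj]
        constructor
        · rintro ⟨h1, h2⟩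
          rw [h1] at h2
          exact ⟨h1, h2⟩
        · rintro ⟨h1, h2⟩
          rw [h1]
          exact ⟨rfl, h2⟩
      rw [hset]
      exact (ih L').inter
        (measurableSet_pick_coord _ (weight_nonneg σ _ _) (weight_sum_one σ _ _) n b)

lemma measurableSet_stateAt (σ : Profile G) (s0 : S) (n : ℕ) (s : S) :
    MeasurableSet {u : USpace | G.stateAt σ s0 u n = s} := by
  classical
  have : {u : USpace | G.stateAt σ s0 u n = s} =
      ⋃ (L : List (P → A)), {u | G.samplePrefix σ s0 u n = L ∧ (G.histOf s0 L).2 = s} := by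
    ext u
    simp only [Set.mem_setOf_eq, Set.mem_iUnion]
    constructor
    · intro h
      exact ⟨_, rfl, h⟩
    · rintro ⟨L, h1, h2⟩
      show (G.histOf s0 (G.samplePrefix σ s0 u n)).2 = s
      rw [h1]
      exact h2
  rw [this]
  apply MeasurableSet.iUnion
  intro L
  by_cases h : (G.histOf s0 L).2 = s
  · simp only [h, and_true]
    exact measurableSet_samplePrefix σ s0 n L
  · simp only [h, and_false]
    exact MeasurableSet.empty

end GameGeneral

section Game1
open scoped Classical

abbrev cff : Fin 2 → Bool := fun _ => false
abbrev ctt : Fin 2 → Bool := fun _ => true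

def hcff (t : ℕ) : Hist (Fin 2) G1State Bool := List.replicate t (G1State.s1, cff)

lemma eq_cff_iff (b : Fin 2 → Bool) : b = cff ↔ (b 0 = false ∧ b 1 = false) := by
  constructor
  · rintro rfl; exact ⟨rfl, rfl⟩
  · rintro ⟨h0, h1⟩
    funext i
    fin_cases i <;> assumption

lemma eq_ctt_iff (b : Fin 2 → Bool) : b = ctt ↔ (b 0 = true ∧ b 1 = true) := by
  constructor
  · rintro rfl; exact ⟨rfl, rfl⟩
  · rintro ⟨h0, h1⟩
    funext i
    fin_cases i <;> assumption

lemma tr_s1 (b : Fin 2 → Bool) : gameG1.tr G1State.s1 b =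
    (if b 0 = false ∧ b 1 = false then G1State.s1
     else if b 0 = true ∧ b 1 = true then G1State.l else G1State.r) := rfl

lemma tr_s1_cff : gameG1.tr G1State.s1 cff = G1State.s1 := by
  rw [tr_s1]; simp

lemma tr_s1_ctt : gameG1.tr G1State.s1 ctt = G1State.l := by
  rw [tr_s1]; simp

lemma tr_s1_eq_s1_iff (b : Fin 2 → Bool) : gameG1.tr G1State.s1 b = G1State.s1 ↔ b = cff := by
  rw [tr_s1, eq_cff_iff]
  cases h0 : b 0 <;> cases h1 : b 1 <;> simp

lemma tr_s1_eq_l_iff (b : Fin 2 → Bool) : gameG1.tr G1State.s1 b = G1State.l ↔ b = ctt := by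
  rw [tr_s1, eq_ctt_iff]
  cases h0 : b 0 <;> cases h1 : b 1 <;> simp

lemma tr_l (b : Fin 2 → Bool) : gameG1.tr G1State.l b = G1State.l := rfl
lemma tr_r (b : Fin 2 → Bool) : gameG1.tr G1State.r b = G1State.r := rfl

lemma G1State.cases' (s : G1State) : s = G1State.s1 ∨ s = G1State.l ∨ s = G1State.r := by
  cases s
  · exact Or.inl rfl
  · exact Or.inr (Or.inl rfl)
  · exact Or.inr (Or.inr rfl)

lemma histOf_replicate (t : ℕ) :
    gameG1.histOf G1State.s1 (List.replicate t cff) = (hcff t, G1State.s1) := by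
  induction t with
  | zero => rfl
  | succ t ih =>
    rw [List.replicate_succ]
    show ((G1State.s1, cff) :: (gameG1.histOf (gameG1.tr G1State.s1 cff) (List.replicate t cff)).1,
      (gameG1.histOf (gameG1.tr G1State.s1 cff) (List.replicate t cff)).2) = _
    rw [tr_s1_cff, ih]
    rfl

lemma stateAt_absorb {σ : Profile gameG1} {u : USpace} {n m : ℕ} {s : G1State}
    (hs : s ≠ G1State.s1) (h : gameG1.stateAt σ G1State.s1 u n = s) (hm : n ≤ m) :
    gameG1.stateAt σ G1State.s1 u m = s := by
  induction m, hm using Nat.le_induction with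
  | base => exact h
  | succ m hm ih =>
    rw [stateAt_succ, ih]
    rcases G1State.cases' s with h' | h' | h'
    · exact absurd h' hs
    · rw [h']; rfl
    · rw [h']; rfl

lemma rew_s1 (i : Fin 2) : gameG1.rew i G1State.s1 = 0 := rfl

lemma not_l_and_r (σ : Profile gameG1) (u : USpace) :
    ¬((∃ n, gameG1.stateAt σ G1State.s1 u n = G1State.l) ∧
      (∃ n, gameG1.stateAt σ G1State.s1 u n = G1State.r)) := by
  rintro ⟨⟨m, hm⟩, ⟨n, hn⟩⟩
  have h1 := stateAt_absorb (by simp) hm (le_max_left m n)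
  have h2 := stateAt_absorb (by simp) hn (le_max_right m n)
  rw [h1] at h2
  exact absurd h2 (by simp)

lemma liminf_avg (g : ℕ → ℝ) (c : ℝ) (n0 : ℕ) (h : ∀ j, g j = if n0 ≤ j then c else 0) :
    Filter.liminf (fun n : ℕ => (∑ j ∈ Finset.range n, g j) / n) Filter.atTop = c := by
  apply Filter.Tendsto.liminf_eq
  have hsum : ∀ n, (∑ j ∈ Finset.range n, g j) = ((n - n0 : ℕ) : ℝ) * c := by
    intro n
    rw [Finset.sum_congr rfl (fun j _ => h j), Finset.sum_ite, Finset.sum_const_zero, add_zero,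
      Finset.sum_const]
    have : Finset.filter (fun j => n0 ≤ j) (Finset.range n) = Finset.Ico n0 n := by
      ext j
      simp [Finset.mem_Ico]
      omega
    rw [this, Nat.card_Ico, nsmul_eq_mul]
  simp only [hsum]
  have h1 : Filter.Tendsto (fun n : ℕ => 1 - (n0 : ℝ) / n) Filter.atTop (nhds 1) := by
    have := tendsto_const_div_atTop_nhds_zero_nat (n0 : ℝ)
    simpa using tendsto_const_nhds.sub this
  have h2 : (fun n : ℕ => ((n - n0 : ℕ) : ℝ) / n) =ᶠ[Filter.atTop] fun n => 1 - (n0 : ℝ) / n := by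
    filter_upwards [Filter.eventually_ge_atTop (max n0 1)] with n hn
    have hn0 : n0 ≤ n := le_trans (le_max_left _ _) hn
    have hnp : (0 : ℝ) < n := by
      have : 1 ≤ n := le_trans (le_max_right _ _) hn
      exact_mod_cast this
    rw [Nat.cast_sub hn0, sub_div, div_self (ne_of_gt hnp)]
  have h3 : Filter.Tendsto (fun n : ℕ => ((n - n0 : ℕ) : ℝ) / n) Filter.atTop (nhds 1) :=
    Filter.Tendsto.congr' h2.symm h1
  have h4 := h3.mul_const c
  rw [one_mul] at h4
  apply h4.congr
  intro n
  rw [div_mul_eq_mul_div]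

lemma payOf_stateAt_eq (σ : Profile gameG1) (u : USpace) (i : Fin 2) :
    gameG1.payOf i (gameG1.stateAt σ G1State.s1 u) =
      if (∃ n, gameG1.stateAt σ G1State.s1 u n = G1State.l) then gameG1.rew i G1State.l
      else if (∃ n, gameG1.stateAt σ G1State.s1 u n = G1State.r) then gameG1.rew i G1State.r
      else 0 := by
  classical
  by_cases hl : ∃ n, gameG1.stateAt σ G1State.s1 u n = G1State.l
  · rw [if_pos hl]
    unfold ConcurrentGame.payOf
    apply liminf_avg _ _ (Nat.find hl)
    intro j
    by_cases hj : Nat.find hl ≤ j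
    · rw [if_pos hj, stateAt_absorb (by simp) (Nat.find_spec hl) hj]
    · rw [if_neg hj]
      have hj' : j < Nat.find hl := lt_of_not_ge hj
      rcases G1State.cases' (gameG1.stateAt σ G1State.s1 u j) with h | h | h
      · rw [h]; rfl
      · exact absurd h (Nat.find_min hl hj')
      · exfalso
        have := stateAt_absorb (by simp) h (le_of_lt hj')
        rw [Nat.find_spec hl] at this
        exact absurd this (by simp)
  · rw [if_neg hl]
    by_cases hr : ∃ n, gameG1.stateAt σ G1State.s1 u n = G1State.r
    · rw [if_pos hr]
      unfold ConcurrentGame.payOf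
      apply liminf_avg _ _ (Nat.find hr)
      intro j
      by_cases hj : Nat.find hr ≤ j
      · rw [if_pos hj, stateAt_absorb (by simp) (Nat.find_spec hr) hj]
      · rw [if_neg hj]
        have hj' : j < Nat.find hr := lt_of_not_ge hj
        rcases G1State.cases' (gameG1.stateAt σ G1State.s1 u j) with h | h | h
        · rw [h]; rfl
        · exact absurd ⟨j, h⟩ hl
        · exact absurd h (Nat.find_min hr hj')
    · rw [if_neg hr]
      unfold ConcurrentGame.payOf
      apply liminf_avg _ _ 0
      intro j
      simp only [Nat.zero_le, if_true]
      rcases G1State.cases' (gameG1.stateAt σ G1State.s1 u j) with h | h | h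
      · rw [h]; rfl
      · exact absurd ⟨j, h⟩ hl
      · exact absurd ⟨j, h⟩ hr

/-- The event that the play of `σ` from `s1` ever reaches `l`. -/
def Rl (σ : Profile gameG1) : Set USpace :=
  {u | ∃ n, gameG1.stateAt σ G1State.s1 u n = G1State.l}

/-- The event that the play of `σ` from `s1` ever reaches `r`. -/
def Rr (σ : Profile gameG1) : Set USpace :=
  {u | ∃ n, gameG1.stateAt σ G1State.s1 u n = G1State.r}

lemma measurableSet_Rl (σ : Profile gameG1) : MeasurableSet (Rl σ) := by
  have : Rl σ = ⋃ n, {u : USpace | gameG1.stateAt σ G1State.s1 u n = G1State.l} := by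
    ext u; simp [Rl]
  rw [this]
  exact MeasurableSet.iUnion fun n => measurableSet_stateAt σ _ n _

lemma measurableSet_Rr (σ : Profile gameG1) : MeasurableSet (Rr σ) := by
  have : Rr σ = ⋃ n, {u : USpace | gameG1.stateAt σ G1State.s1 u n = G1State.r} := by
    ext u; simp [Rr]
  rw [this]
  exact MeasurableSet.iUnion fun n => measurableSet_stateAt σ _ n _

lemma expPay_formula (σ : Profile gameG1) (i : Fin 2) :
    gameG1.expPay σ G1State.s1 i =
      gameG1.rew i G1State.l * (uHaar (Rl σ)).toReal
        + gameG1.rew i G1State.r * (uHaar (Rr σ)).toReal := by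
  classical
  have hpt : ∀ u, gameG1.payOf i (gameG1.stateAt σ G1State.s1 u)
      = (Rl σ).indicator (fun _ => gameG1.rew i G1State.l) u
        + (Rr σ).indicator (fun _ => gameG1.rew i G1State.r) u := by
    intro u
    rw [payOf_stateAt_eq]
    by_cases hl : ∃ n, gameG1.stateAt σ G1State.s1 u n = G1State.l
    · rw [if_pos hl, Set.indicator_of_mem (show u ∈ Rl σ from hl),
        Set.indicator_of_notMem (show u ∉ Rr σ from fun hr => not_l_and_r σ u ⟨hl, hr⟩),
        add_zero]
    · rw [if_neg hl, Set.indicator_of_notMem (show u ∉ Rl σ from hl), zero_add]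
      by_cases hr : ∃ n, gameG1.stateAt σ G1State.s1 u n = G1State.r
      · rw [if_pos hr, Set.indicator_of_mem (show u ∈ Rr σ from hr)]
      · rw [if_neg hr, Set.indicator_of_notMem (show u ∉ Rr σ from hr)]
  show (∫ u, gameG1.payOf i (gameG1.stateAt σ G1State.s1 u) ∂uHaar) = _
  rw [integral_congr_ae (Filter.Eventually.of_forall hpt), integral_add
      ((integrable_const _).indicator (measurableSet_Rl σ))
      ((integrable_const _).indicator (measurableSet_Rr σ)),
    integral_indicator_const _ (measurableSet_Rl σ),
    integral_indicator_const _ (measurableSet_Rr σ), smul_eq_mul, smul_eq_mul,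
    mul_comm _ (gameG1.rew i G1State.l), mul_comm _ (gameG1.rew i G1State.r)]
  rfl

end Game1



section Deviations
open scoped Classical

lemma coordReal_mem_Ico (u : USpace) (n : ℕ) : coordReal u n ∈ Set.Ico (0:ℝ) 1 :=
  coord_mem_Ico (u n)

/-- Pure strategy for player `i0`: play `b` (= `true`) iff the history has length `t`. -/
def devStrat (i0 : Fin 2) (t : ℕ) : gameG1.Strategy i0 where
  prob x _ a := if a = decide (x.length = t) then 1 else 0
  nonneg _ _ _ := by split <;> norm_num
  sum_one _ _ := by simp
  supp _ _ a _ := Set.mem_univ a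

/-- Pure strategy: always play `a` (= `false`). -/
def allFalse (i0 : Fin 2) : gameG1.Strategy i0 where
  prob _ _ a := if a = false then 1 else 0
  nonneg _ _ _ := by split <;> norm_num
  sum_one _ _ := by simp
  supp _ _ a _ := Set.mem_univ a

/-- The distribution of action profiles at step `j` along the all-`a` history. -/
def wj (σ' : Profile gameG1) (j : ℕ) : (Fin 2 → Bool) → ℝ :=
  gameG1.weight σ' (hcff j) G1State.s1

lemma wj_nonneg (σ' : Profile gameG1) (j : ℕ) (b : Fin 2 → Bool) : 0 ≤ wj σ' j b :=
  weight_nonneg σ' _ _ b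

lemma wj_sum_one (σ' : Profile gameG1) (j : ℕ) : ∑ b, wj σ' j b = 1 :=
  weight_sum_one σ' _ _

lemma stateAt_of_replicate {σ' : Profile gameG1} {u : USpace} {n : ℕ}
    (h : gameG1.samplePrefix σ' G1State.s1 u n = List.replicate n cff) :
    gameG1.stateAt σ' G1State.s1 u n = G1State.s1 := by
  show (gameG1.histOf _ _).2 = _
  rw [h, histOf_replicate]

lemma dev_prefix (σ' : Profile gameG1) (t : ℕ)
    (Hlow : ∀ j, j < t → ∀ b, wj σ' j b ≠ 0 → b ≠ ctt) (u : USpace) :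
    ∀ n, n ≤ t →
      gameG1.samplePrefix σ' G1State.s1 u n = List.replicate n cff ∨
      gameG1.stateAt σ' G1State.s1 u n = G1State.r := by
  intro n
  induction n with
  | zero => intro _; exact Or.inl rfl
  | succ n ih =>
    intro hn
    rcases ih (by omega) with h | h
    · have hst : gameG1.stateAt σ' G1State.s1 u n = G1State.s1 := stateAt_of_replicate h
      have hpickb : pick (gameG1.weight σ' (gameG1.histOf G1State.s1
          (gameG1.samplePrefix σ' G1State.s1 u n)).1 (gameG1.histOf G1State.s1
          (gameG1.samplePrefix σ' G1State.s1 u n)).2) (coordReal u n)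
          = pick (wj σ' n) (coordReal u n) := by
        rw [h, histOf_replicate]
        rfl
      set b := pick (wj σ' n) (coordReal u n) with hb
      have hbpos : 0 < wj σ' n b :=
        pick_pos (wj_nonneg σ' n) (wj_sum_one σ' n) (coordReal_mem_Ico u n)
      have hbl : b ≠ ctt := Hlow n (by omega) b (ne_of_gt hbpos)
      by_cases hcffb : b = cff
      · left
        rw [samplePrefix_succ, hpickb, h, hcffb, ← List.replicate_succ']
      · right
        rw [stateAt_succ, hpickb, hst]
        rcases G1State.cases' (gameG1.tr G1State.s1 b) with h' | h' | h'
        · exact absurd ((tr_s1_eq_s1_iff b).mp h') hcffb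
        · exact absurd ((tr_s1_eq_l_iff b).mp h') hbl
        · exact h'
    · right
      rw [stateAt_succ, h]
      rfl

lemma samplePrefix_replicate_iff (σ' : Profile gameG1) (u : USpace) (n : ℕ) :
    gameG1.samplePrefix σ' G1State.s1 u n = List.replicate n cff ↔
      ∀ j, j < n → u j ∈ pickCell (wj σ' j) cff := by
  induction n with
  | zero => simp [ConcurrentGame.samplePrefix]
  | succ n ih =>
    rw [samplePrefix_succ, List.replicate_succ', ← List.concat_eq_append,
      ← List.concat_eq_append, List.concat_inj]
    constructor
    · rintro ⟨h1, h2⟩ j hj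
      rcases Nat.lt_succ_iff_lt_or_eq.mp hj with hj' | rfl
      · exact ih.mp h1 j hj'
      · rw [h1, histOf_replicate] at h2
        exact h2
    · intro hj
      have h1 : gameG1.samplePrefix σ' G1State.s1 u n = List.replicate n cff :=
        ih.mpr (fun j hjn => hj j (by omega))
      refine ⟨h1, ?_⟩
      rw [h1, histOf_replicate]
      exact hj n (by omega)

lemma stateAtT1_eq_l_iff (σ' : Profile gameG1) (t : ℕ)
    (Hlow : ∀ j, j < t → ∀ b, wj σ' j b ≠ 0 → b ≠ ctt) (u : USpace) :
    gameG1.stateAt σ' G1State.s1 u (t+1) = G1State.l ↔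
      (gameG1.samplePrefix σ' G1State.s1 u t = List.replicate t cff ∧
        pick (wj σ' t) (coordReal u t) = ctt) := by
  constructor
  · intro h
    rcases dev_prefix σ' t Hlow u t le_rfl with hp | hp
    · refine ⟨hp, ?_⟩
      have hst : gameG1.stateAt σ' G1State.s1 u t = G1State.s1 := stateAt_of_replicate hp
      rw [stateAt_succ, hst, hp, histOf_replicate] at h
      exact (tr_s1_eq_l_iff _).mp h
    · exfalso
      have habs := stateAt_absorb (by simp) hp (Nat.le_succ t)
      rw [h] at habs
      simp at habs
  · rintro ⟨h1, h2⟩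
    have hst : gameG1.stateAt σ' G1State.s1 u t = G1State.s1 := stateAt_of_replicate h1
    rw [stateAt_succ, hst, h1, histOf_replicate]
    show gameG1.tr G1State.s1 (pick (wj σ' t) (coordReal u t)) = G1State.l
    rw [h2]
    exact tr_s1_ctt

lemma stateAtT1_cases (σ' : Profile gameG1) (t : ℕ)
    (Hlow : ∀ j, j < t → ∀ b, wj σ' j b ≠ 0 → b ≠ ctt)
    (Hhi : ∀ b, wj σ' t b ≠ 0 → b ≠ cff) (u : USpace) :
    gameG1.stateAt σ' G1State.s1 u (t+1) = G1State.l ∨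
      gameG1.stateAt σ' G1State.s1 u (t+1) = G1State.r := by
  rcases dev_prefix σ' t Hlow u t le_rfl with hp | hp
  · have hst : gameG1.stateAt σ' G1State.s1 u t = G1State.s1 := stateAt_of_replicate hp
    rw [stateAt_succ, hst, hp, histOf_replicate]
    show gameG1.tr G1State.s1 (pick (wj σ' t) (coordReal u t)) = G1State.l ∨
      gameG1.tr G1State.s1 (pick (wj σ' t) (coordReal u t)) = G1State.r
    set b := pick (wj σ' t) (coordReal u t) with hb
    have hbpos : 0 < wj σ' t b :=
      pick_pos (wj_nonneg σ' t) (wj_sum_one σ' t) (coordReal_mem_Ico u t)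
    have hbn : b ≠ cff := Hhi b (ne_of_gt hbpos)
    rcases G1State.cases' (gameG1.tr G1State.s1 b) with h' | h' | h'
    · exact absurd ((tr_s1_eq_s1_iff b).mp h') hbn
    · exact Or.inl h'
    · exact Or.inr h'
  · right
    exact stateAt_absorb (by simp) hp (Nat.le_succ t)

lemma dev_Rl_iff (σ' : Profile gameG1) (t : ℕ)
    (Hlow : ∀ j, j < t → ∀ b, wj σ' j b ≠ 0 → b ≠ ctt)
    (Hhi : ∀ b, wj σ' t b ≠ 0 → b ≠ cff) (u : USpace) :
    u ∈ Rl σ' ↔ gameG1.stateAt σ' G1State.s1 u (t+1) = G1State.l := by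
  constructor
  · rintro ⟨n, hn⟩
    rcases le_or_gt n (t+1) with h | h
    · exact stateAt_absorb (by simp) hn h
    · rcases stateAtT1_cases σ' t Hlow Hhi u with h' | h'
      · exact h'
      · exfalso
        have := stateAt_absorb (by simp) h' (le_of_lt h)
        rw [hn] at this
        simp at this
  · intro h
    exact ⟨t+1, h⟩

lemma dev_Rr_eq (σ' : Profile gameG1) (t : ℕ)
    (Hlow : ∀ j, j < t → ∀ b, wj σ' j b ≠ 0 → b ≠ ctt)
    (Hhi : ∀ b, wj σ' t b ≠ 0 → b ≠ cff) :
    Rr σ' = (Rl σ')ᶜ := by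
  ext u
  have hr : u ∈ Rr σ' ↔ gameG1.stateAt σ' G1State.s1 u (t+1) = G1State.r := by
    constructor
    · rintro ⟨n, hn⟩
      rcases le_or_gt n (t+1) with h | h
      · exact stateAt_absorb (by simp) hn h
      · rcases stateAtT1_cases σ' t Hlow Hhi u with h' | h'
        · exfalso
          have := stateAt_absorb (by simp) h' (le_of_lt h)
          rw [hn] at this
          simp at this
        · exact h'
    · intro h
      exact ⟨t+1, h⟩
  rw [Set.mem_compl_iff, dev_Rl_iff σ' t Hlow Hhi, hr]
  rcases stateAtT1_cases σ' t Hlow Hhi u with h | h <;> rw [h] <;> simp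

lemma dev_uHaar_Rl (σ' : Profile gameG1) (t : ℕ)
    (Hlow : ∀ j, j < t → ∀ b, wj σ' j b ≠ 0 → b ≠ ctt)
    (Hhi : ∀ b, wj σ' t b ≠ 0 → b ≠ cff) :
    uHaar (Rl σ') =
      ENNReal.ofReal ((∏ j ∈ Finset.range t, wj σ' j cff) * wj σ' t ctt) := by
  set B : Fin (t+1) → Set (AddCircle (1:ℝ)) := fun j =>
    if (j : ℕ) < t then pickCell (wj σ' (j : ℕ)) cff else pickCell (wj σ' t) ctt with hB
  have hset : Rl σ' = {u : USpace | ∀ j : Fin (t+1), u (j : ℕ) ∈ B j} := by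
    ext u
    rw [Set.mem_setOf_eq, dev_Rl_iff σ' t Hlow Hhi, stateAtT1_eq_l_iff σ' t Hlow,
      samplePrefix_replicate_iff]
    constructor
    · rintro ⟨h1, h2⟩ j
      by_cases hj : (j : ℕ) < t
      · rw [hB]
        simp only [if_pos hj]
        exact h1 (j : ℕ) hj
      · rw [hB]
        simp only [if_neg hj]
        rw [show (j : ℕ) = t by omega]
        exact h2
    · intro hj
      constructor
      · intro j hjt
        have := hj ⟨j, by omega⟩
        rw [hB] at this
        simpa only [if_pos hjt] using this
      · have := hj ⟨t, by omega⟩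
        rw [hB] at this
        simp only [Fin.val_mk, lt_irrefl, if_false] at this
        exact this
  have hBm : ∀ j : Fin (t+1), MeasurableSet (B j) := by
    intro j
    rw [hB]
    by_cases hj : (j : ℕ) < t
    · simp only [if_pos hj]
      exact measurableSet_pickCell (wj_nonneg σ' _) (wj_sum_one σ' _) _
    · simp only [if_neg hj]
      exact measurableSet_pickCell (wj_nonneg σ' _) (wj_sum_one σ' _) _
  rw [hset, uHaar_cylinder (t+1) B hBm, Fin.prod_univ_castSucc]

  have h1 : ∀ j : Fin t, volume (B (Fin.castSucc j)) = ENNReal.ofReal (wj σ' (j : ℕ) cff) := by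
    intro j
    rw [hB]
    simp only [Fin.coe_castSucc, if_pos j.isLt]
    exact volume_pickCell (wj_nonneg σ' _) (wj_sum_one σ' _) _
  have h2 : volume (B (Fin.last t)) = ENNReal.ofReal (wj σ' t ctt) := by
    rw [hB]
    simp only [Fin.val_last, lt_irrefl, if_neg]
    exact volume_pickCell (wj_nonneg σ' _) (wj_sum_one σ' _) _
  calc (∏ j : Fin t, volume (B j.castSucc)) * volume (B (Fin.last t))
      = (∏ j : Fin t, ENNReal.ofReal (wj σ' (j : ℕ) cff)) * ENNReal.ofReal (wj σ' t ctt) := by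
        rw [Finset.prod_congr rfl (fun j _ => h1 j), h2]
    _ = (∏ j ∈ Finset.range t, ENNReal.ofReal (wj σ' j cff)) * ENNReal.ofReal (wj σ' t ctt) := by
        rw [Fin.prod_univ_eq_prod_range (fun m => ENNReal.ofReal (wj σ' m cff)) t]
    _ = ENNReal.ofReal (∏ j ∈ Finset.range t, wj σ' j cff) * ENNReal.ofReal (wj σ' t ctt) := by
        rw [ENNReal.ofReal_prod_of_nonneg (fun j _ => wj_nonneg σ' _ _)]
    _ = ENNReal.ofReal ((∏ j ∈ Finset.range t, wj σ' j cff) * wj σ' t ctt) :=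
        (ENNReal.ofReal_mul (Finset.prod_nonneg (fun j _ => wj_nonneg σ' _ _))).symm

lemma dev_expPay (σ' : Profile gameG1) (t : ℕ)
    (Hlow : ∀ j, j < t → ∀ b, wj σ' j b ≠ 0 → b ≠ ctt)
    (Hhi : ∀ b, wj σ' t b ≠ 0 → b ≠ cff) (i : Fin 2) :
    gameG1.expPay σ' G1State.s1 i =
      gameG1.rew i G1State.l * ((∏ j ∈ Finset.range t, wj σ' j cff) * wj σ' t ctt)
        + gameG1.rew i G1State.r *
          (1 - (∏ j ∈ Finset.range t, wj σ' j cff) * wj σ' t ctt) := by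
  set q : ℝ := (∏ j ∈ Finset.range t, wj σ' j cff) * wj σ' t ctt with hq
  have hq0 : 0 ≤ q :=
    mul_nonneg (Finset.prod_nonneg (fun j _ => wj_nonneg σ' _ _)) (wj_nonneg σ' _ _)
  have hql : uHaar (Rl σ') = ENNReal.ofReal q := dev_uHaar_Rl σ' t Hlow Hhi
  have hle1 : ENNReal.ofReal q ≤ 1 := by
    rw [← hql]
    exact prob_le_one
  rw [expPay_formula σ' i, dev_Rr_eq σ' t Hlow Hhi,
    prob_compl_eq_one_sub (measurableSet_Rl σ'), hql,
    ENNReal.toReal_ofReal hq0, ENNReal.toReal_sub_of_le hle1 ENNReal.one_ne_top,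
    ENNReal.toReal_one, ENNReal.toReal_ofReal hq0]

lemma prob_false_eq {i : Fin 2} (τ : gameG1.Strategy i) (x : Hist (Fin 2) G1State Bool)
    (s : G1State) : τ.prob x s false = 1 - τ.prob x s true := by
  have := τ.sum_one x s
  rw [Fintype.sum_bool] at this
  linarith

lemma length_hcff (j : ℕ) : (hcff j).length = j := by simp [hcff]

lemma wj_update0 (σ : Profile gameG1) (t j : ℕ) (b : Fin 2 → Bool) :
    wj (Function.update σ 0 (devStrat 0 t)) j b =
      (if b 0 = decide (j = t) then 1 else 0) * (σ 1).prob (hcff j) G1State.s1 (b 1) := by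
  unfold wj ConcurrentGame.weight
  rw [Fin.prod_univ_two]
  have e0 : (Function.update σ 0 (devStrat 0 t) 0).prob (hcff j) G1State.s1 (b 0)
      = (if b 0 = decide (j = t) then (1:ℝ) else 0) := by
    rw [Function.update_self]
    show (if b 0 = decide ((hcff j).length = t) then (1:ℝ) else 0) = _
    rw [length_hcff]
  have e1 : (Function.update σ 0 (devStrat 0 t) 1).prob (hcff j) G1State.s1 (b 1)
      = (σ 1).prob (hcff j) G1State.s1 (b 1) := by
    rw [Function.update_of_ne (show (1 : Fin 2) ≠ 0 by decide)]
  rw [e0, e1]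

lemma wj_update1 (σ : Profile gameG1) (t j : ℕ) (b : Fin 2 → Bool) :
    wj (Function.update σ 1 (devStrat 1 t)) j b =
      (σ 0).prob (hcff j) G1State.s1 (b 0) * (if b 1 = decide (j = t) then 1 else 0) := by
  unfold wj ConcurrentGame.weight
  rw [Fin.prod_univ_two]
  have e0 : (Function.update σ 1 (devStrat 1 t) 0).prob (hcff j) G1State.s1 (b 0)
      = (σ 0).prob (hcff j) G1State.s1 (b 0) := by
    rw [Function.update_of_ne (show (0 : Fin 2) ≠ 1 by decide)]
  have e1 : (Function.update σ 1 (devStrat 1 t) 1).prob (hcff j) G1State.s1 (b 1)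
      = (if b 1 = decide (j = t) then (1:ℝ) else 0) := by
    rw [Function.update_self]
    show (if b 1 = decide ((hcff j).length = t) then (1:ℝ) else 0) = _
    rw [length_hcff]
  rw [e0, e1]

lemma dev0_expPay (σ : Profile gameG1) (t : ℕ) :
    gameG1.expPay (Function.update σ 0 (devStrat 0 t)) G1State.s1 0 =
      1 - 2 * ((∏ j ∈ Finset.range t, (1 - (σ 1).prob (hcff j) G1State.s1 true)) *
        (σ 1).prob (hcff t) G1State.s1 true) := by
  set σ' := Function.update σ 0 (devStrat 0 t) with hσ'
  have Hlow : ∀ j, j < t → ∀ b, wj σ' j b ≠ 0 → b ≠ ctt := by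
    rintro j hj b hb rfl
    apply hb
    rw [hσ', wj_update0]
    have : ¬ (j = t) := by omega
    simp [this]
  have Hhi : ∀ b, wj σ' t b ≠ 0 → b ≠ cff := by
    rintro b hb rfl
    apply hb
    rw [hσ', wj_update0]
    simp
  have hcffw : ∀ j, j < t → wj σ' j cff = 1 - (σ 1).prob (hcff j) G1State.s1 true := by
    intro j hj
    rw [hσ', wj_update0]
    have : ¬ (j = t) := by omega
    rw [if_pos (by simp [this]), one_mul, prob_false_eq]
  have httw : wj σ' t ctt = (σ 1).prob (hcff t) G1State.s1 true := by
    rw [hσ', wj_update0]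
    simp [show ctt 0 = true from rfl, show ctt 1 = true from rfl]
  rw [dev_expPay σ' t Hlow Hhi 0, Finset.prod_congr rfl (fun j hj =>
    hcffw j (Finset.mem_range.mp hj)), httw]
  show (-1 : ℝ) * _ + 1 * _ = _
  ring

lemma dev1_expPay (σ : Profile gameG1) (t : ℕ) :
    gameG1.expPay (Function.update σ 1 (devStrat 1 t)) G1State.s1 1 =
      2 * ((∏ j ∈ Finset.range t, (1 - (σ 0).prob (hcff j) G1State.s1 true)) *
        (σ 0).prob (hcff t) G1State.s1 true) - 1 := by
  set σ' := Function.update σ 1 (devStrat 1 t) with hσ'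
  have Hlow : ∀ j, j < t → ∀ b, wj σ' j b ≠ 0 → b ≠ ctt := by
    rintro j hj b hb rfl
    apply hb
    rw [hσ', wj_update1]
    have : ¬ (j = t) := by omega
    simp [this]
  have Hhi : ∀ b, wj σ' t b ≠ 0 → b ≠ cff := by
    rintro b hb rfl
    apply hb
    rw [hσ', wj_update1]
    simp
  have hcffw : ∀ j, j < t → wj σ' j cff = 1 - (σ 0).prob (hcff j) G1State.s1 true := by
    intro j hj
    rw [hσ', wj_update1]
    have : ¬ (j = t) := by omega
    rw [if_pos (by simp [this]), mul_one, prob_false_eq]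
  have httw : wj σ' t ctt = (σ 0).prob (hcff t) G1State.s1 true := by
    rw [hσ', wj_update1]
    simp [show ctt 0 = true from rfl, show ctt 1 = true from rfl]
  rw [dev_expPay σ' t Hlow Hhi 1, Finset.prod_congr rfl (fun j hj =>
    hcffw j (Finset.mem_range.mp hj)), httw]
  show (1 : ℝ) * _ + (-1) * _ = _
  ring

lemma allFalse_expPay (σ : Profile gameG1)
    (hα : ∀ j, (σ 0).prob (hcff j) G1State.s1 true = 0) :
    gameG1.expPay (Function.update σ 1 (allFalse 1)) G1State.s1 1 = 0 := by
  set σ' := Function.update σ 1 (allFalse 1) with hσ'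
  have hw : ∀ j b, wj σ' j b ≠ 0 → b = cff := by
    intro j b hb
    rw [eq_cff_iff]
    unfold wj ConcurrentGame.weight at hb
    rw [Fin.prod_univ_two] at hb
    constructor
    · by_contra h0
      apply hb
      have hb0 : b 0 = true := by
        cases h : b 0
        · exact absurd h h0
        · rfl
      rw [hσ', Function.update_of_ne (show (0 : Fin 2) ≠ 1 by decide), hb0, hα j, zero_mul]
    · by_contra h1
      apply hb
      have hb1 : b 1 = true := by
        cases h : b 1
        · exact absurd h h1
        · rfl
      rw [hσ', Function.update_self, hb1]
      show _ * (if (true : Bool) = false then (1:ℝ) else 0) = 0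
      simp
  have hsp : ∀ u n, gameG1.samplePrefix σ' G1State.s1 u n = List.replicate n cff := by
    intro u n
    induction n with
    | zero => rfl
    | succ n ih =>
      have hpk : pick (wj σ' n) (coordReal u n) = cff :=
        hw n _ (ne_of_gt (pick_pos (wj_nonneg σ' n) (wj_sum_one σ' n) (coordReal_mem_Ico u n)))
      rw [samplePrefix_succ, ih, histOf_replicate,
        show gameG1.weight σ' (hcff n, G1State.s1).1 (hcff n, G1State.s1).2 = wj σ' n from rfl,
        hpk, ← List.replicate_succ']
  have hst : ∀ u n, gameG1.stateAt σ' G1State.s1 u n = G1State.s1 := by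
    intro u n
    exact stateAt_of_replicate (hsp u n)
  have hpt : ∀ u : USpace, gameG1.payOf 1 (gameG1.stateAt σ' G1State.s1 u) = 0 := by
    intro u
    rw [payOf_stateAt_eq]
    rw [if_neg, if_neg]
    · rintro ⟨n, hn⟩
      rw [hst u n] at hn
      simp at hn
    · rintro ⟨n, hn⟩
      rw [hst u n] at hn
      simp at hn
  show (∫ u, gameG1.payOf 1 (gameG1.stateAt σ' G1State.s1 u) ∂uHaar) = 0
  rw [integral_congr_ae (Filter.Eventually.of_forall hpt)]
  exact integral_zero _ _

end Deviations



section Arith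

lemma seq_bound (p : ℕ → ℝ) (hp : ∀ j, 0 ≤ p j ∧ p j ≤ 1) (v : ℝ)
    (h : ∀ t, 1 - 2 * ((∏ j ∈ Finset.range t, (1 - p j)) * p t) ≤ v) : 1 ≤ v := by
  by_contra hv
  push_neg at hv
  set c := (1 - v) / 2 with hc
  have hcpos : 0 < c := by rw [hc]; linarith
  have hstep : ∀ t, c ≤ (∏ j ∈ Finset.range t, (1 - p j)) * p t := by
    intro t
    have := h t
    rw [hc]
    linarith
  have hQ : ∀ t : ℕ, (∏ j ∈ Finset.range t, (1 - p j)) ≤ 1 - t * c := by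
    intro t
    induction t with
    | zero => simp
    | succ t ih =>
      rw [Finset.prod_range_succ]
      have h1 : (∏ j ∈ Finset.range t, (1 - p j)) * (1 - p t)
          = (∏ j ∈ Finset.range t, (1 - p j)) - (∏ j ∈ Finset.range t, (1 - p j)) * p t := by
        ring
      rw [h1]
      have h2 := hstep t
      push_cast
      linarith
  obtain ⟨n, hn⟩ := exists_nat_gt (1 / c)
  have h2 := hQ n
  have h3 : (0:ℝ) ≤ ∏ j ∈ Finset.range n, (1 - p j) :=
    Finset.prod_nonneg fun j _ => by linarith [(hp j).2]
  rw [div_lt_iff₀ hcpos] at hn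
  linarith

lemma seq_zero (p : ℕ → ℝ) (hp : ∀ j, 0 ≤ p j)
    (h : ∀ t, (∏ j ∈ Finset.range t, (1 - p j)) * p t ≤ 0) : ∀ t, p t = 0 := by
  intro t
  induction t using Nat.strong_induction_on with
  | _ t ih =>
    have hprod : (∏ j ∈ Finset.range t, (1 - p j)) = 1 := by
      apply Finset.prod_eq_one
      intro j hj
      rw [ih j (Finset.mem_range.mp hj)]
      ring
    have h2 := h t
    rw [hprod, one_mul] at h2
    linarith [hp t]

end Arith


/-- The initialised game `(G₁, s₁)` has no Nash equilibrium. -/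
theorem gameG1_no_nash_equilibrium :
    ¬ ∃ σ : Profile gameG1, gameG1.IsNash σ G1State.s1 := by
  classical
  rintro ⟨σ, hN⟩
  have hr0l : gameG1.rew 0 G1State.l = -1 := rfl
  have hr0r : gameG1.rew 0 G1State.r = 1 := rfl
  have hr1l : gameG1.rew 1 G1State.l = 1 := rfl
  have hr1r : gameG1.rew 1 G1State.r = -1 := rfl
  have hzero : gameG1.expPay σ G1State.s1 0 + gameG1.expPay σ G1State.s1 1 = 0 := by
    rw [expPay_formula σ 0, expPay_formula σ 1, hr0l, hr0r, hr1l, hr1r]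
    ring
  have hβ01 : ∀ j, 0 ≤ (σ 1).prob (hcff j) G1State.s1 true ∧
      (σ 1).prob (hcff j) G1State.s1 true ≤ 1 := by
    intro j
    refine ⟨(σ 1).nonneg _ _ _, ?_⟩
    have h1 := prob_false_eq (σ 1) (hcff j) G1State.s1
    have h2 := (σ 1).nonneg (hcff j) G1State.s1 false
    rw [h1] at h2
    linarith
  have hv1ge : 1 ≤ gameG1.expPay σ G1State.s1 0 := by
    apply seq_bound _ hβ01
    intro t
    have h := hN 0 (devStrat 0 t)
    rw [dev0_expPay σ t] at h
    exact h
  have hαzero : ∀ t, (σ 0).prob (hcff t) G1State.s1 true = 0 := by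
    apply seq_zero _ (fun j => (σ 0).nonneg _ _ _)
    intro t
    have h := hN 1 (devStrat 1 t)
    rw [dev1_expPay σ t] at h
    linarith
  have hfinal := hN 1 (allFalse 1)
  rw [allFalse_expPay σ hαzero] at hfinal
  linarith

end
end

section
/- For every real p with 0 < p < 1, setting q = 1 − p, the function f(x) = (p + q·p·x)/(1 − q²x²) attains its maximum over the set {x ∈ [0,1] : (1−p)x² − 2x + 1 ≥ 0} at x₀ = (1−√p)/(1−p), and the maximum value f(x₀) equals √p. -/
/-! ## Statement: maximising `f(x) = (p + qpx)/(1 - q²x²)` -/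

/-- For `0 < p < 1` and `q = 1 - p`, the function `f(x) = (p + q·p·x)/(1 - q²x²)` attains its
maximum over `{x ∈ [0,1] : (1-p)x² - 2x + 1 ≥ 0}` at `x₀ = (1 - √p)/(1 - p)`, and the maximum
value `f(x₀)` equals `√p`. -/
theorem max_of_f_eq_sqrt (p : ℝ) (hp0 : 0 < p) (hp1 : p < 1) :
    ((1 - Real.sqrt p) / (1 - p) ∈
        {x : ℝ | x ∈ Set.Icc (0:ℝ) 1 ∧ 0 ≤ (1 - p) * x ^ 2 - 2 * x + 1}) ∧
    (∀ x ∈ {x : ℝ | x ∈ Set.Icc (0:ℝ) 1 ∧ 0 ≤ (1 - p) * x ^ 2 - 2 * x + 1},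
        (p + (1 - p) * p * x) / (1 - (1 - p) ^ 2 * x ^ 2) ≤
          (p + (1 - p) * p * ((1 - Real.sqrt p) / (1 - p))) /
            (1 - (1 - p) ^ 2 * ((1 - Real.sqrt p) / (1 - p)) ^ 2)) ∧
    (p + (1 - p) * p * ((1 - Real.sqrt p) / (1 - p))) /
        (1 - (1 - p) ^ 2 * ((1 - Real.sqrt p) / (1 - p)) ^ 2) = Real.sqrt p := by
  set s := Real.sqrt p with hs
  have hs2 : s * s = p := Real.mul_self_sqrt hp0.le
  have hs0 : 0 < s := Real.sqrt_pos.mpr hp0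
  have hs1 : s < 1 := by nlinarith
  have hq : 0 < 1 - p := by linarith
  -- x₀ rewritten
  have hx0 : (1 - s) / (1 - p) = 1 / (1 + s) := by
    rw [div_eq_div_iff hq.ne' (by positivity)]
    nlinarith
  set x₀ : ℝ := (1 - s) / (1 - p) with hx₀def
  have hqx0 : (1 - p) * x₀ = 1 - s := by
    rw [hx₀def]; field_simp
  have hx0pos : 0 < x₀ := div_pos (by linarith) hq
  have hx0le : x₀ ≤ 1 := by
    rw [hx₀def, div_le_one hq]; nlinarith
  -- value at x₀ equals s
  have hval : (p + (1 - p) * p * x₀) / (1 - (1 - p) ^ 2 * x₀ ^ 2) = s := by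
    have hnum : p + (1 - p) * p * x₀ = s * s * (2 - s) := by
      have : (1 - p) * p * x₀ = p * ((1 - p) * x₀) := by ring
      rw [this, hqx0]; nlinarith
    have hden : 1 - (1 - p) ^ 2 * x₀ ^ 2 = s * (2 - s) := by
      have : (1 - p) ^ 2 * x₀ ^ 2 = ((1 - p) * x₀) * ((1 - p) * x₀) := by ring
      rw [this, hqx0]; ring
    rw [hnum, hden, div_eq_iff (by nlinarith : s * (2 - s) ≠ 0)]
    ring
  refine ⟨⟨⟨hx0pos.le, hx0le⟩, ?_⟩, ?_, hval⟩
  · -- constraint at x₀ : equals 0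
    show 0 ≤ (1 - p) * ((1 - s) / (1 - p)) ^ 2 - 2 * ((1 - s) / (1 - p)) + 1
    have h2 : (1 - p) * ((1 - s) / (1 - p)) ^ 2 - 2 * ((1 - s) / (1 - p)) + 1 = 0 := by
      field_simp
      nlinarith
    linarith
  · rintro x ⟨⟨hx0', hx1'⟩, hcon⟩
    rw [hval]
    -- x ≤ x₀, i.e. (1-p) x ≤ 1 - s
    have hqx : (1 - p) * x ≤ 1 - s := by
      by_contra h
      push_neg at h
      -- constraint: (1-p)x² - 2x + 1 = (1-p)(x - x₀)(x - (1+s)/(1-p))... use nlinarith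
      have h2 : x < (1 + s) / (1 - p) := by
        rw [lt_div_iff₀ hq]; nlinarith
      have hfac : (1 - p) * x ^ 2 - 2 * x + 1 =
          ((1 - p) * x - (1 - s)) * (x - (1 + s) / (1 - p)) := by
        field_simp
        nlinarith
      nlinarith [mul_pos (by linarith : (0:ℝ) < (1 - p) * x - (1 - s))
        (by linarith : (0:ℝ) < (1 + s) / (1 - p) - x)]
    have hden : 0 < 1 - (1 - p) ^ 2 * x ^ 2 := by nlinarith
    rw [div_le_iff₀ hden]
    nlinarith [mul_nonneg (by nlinarith : (0:ℝ) ≤ 1 + (1 - p) * x)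
      (by linarith : (0:ℝ) ≤ 1 - s - (1 - p) * x), hs0.le]
end
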